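/- Let Γ be a Gromov hyperbolic graph, ω a point of its boundary, and for vertices u, v let ℓ(u,v) be the minimal value of the Busemann function λ(·) = β_ω(·, x₀) along a chosen geodesic from u to v. Then there exists a constant c > 0 (independent of u, v, and the choice of geodesics) such that |ℓ(u,v) − ℓ_{ω,x₀}(u,v)| < c, where ℓ_{ω,x₀}(u,v) = ½(β_ω(u,x₀) + β_ω(v,x₀) − d(u,v)). -/

import Mathlib

open Filter

/-- The Gromov product in a connected graph, with respect to the graph distance
and a base vertex `x₀`. -/
noncomputable def graphGromovProd {V : Type*} (G : SimpleGraph V) (x₀ x y : V) : ℝ :=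
  ((G.dist x₀ x : ℝ) + (G.dist x₀ y : ℝ) - (G.dist x y : ℝ)) / 2

/-- The graph distance, as a real number. -/
private noncomputable def ddist {V : Type*} (G : SimpleGraph V) (a b : V) : ℝ :=
  (G.dist a b : ℝ)

private lemma ddist_tri {V : Type*} {G : SimpleGraph V} (hconn : G.Connected) (a b c : V) :
    ddist G a c ≤ ddist G a b + ddist G b c := by
  have h := hconn.dist_triangle (u := a) (v := b) (w := c)
  unfold ddist
  exact_mod_cast h

private lemma ddist_comm {V : Type*} (G : SimpleGraph V) (a b : V) :
    ddist G a b = ddist G b a := by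
  unfold ddist
  rw [SimpleGraph.dist_comm]

private lemma gromovProd_eq {V : Type*} (G : SimpleGraph V) (x₀ a b : V) :
    graphGromovProd G x₀ a b = (ddist G x₀ a + ddist G x₀ b - ddist G a b) / 2 := rfl

private lemma gromov_four {δ pab pce pac pbc pae pbe : ℝ}
    (h1 : pab ≥ min pac pbc - δ) (h2 : pce ≥ min pac pae - δ)
    (h3 : pce ≥ min pbc pbe - δ) (h4 : pab ≥ min pae pbe - δ) :
    min (pac + pbe) (pbc + pae) - 2*δ ≤ pab + pce := by
  rcases min_cases pac pbc with ⟨e1, o1⟩ | ⟨e1, o1⟩ <;> rw [e1] at h1 <;>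
  rcases min_cases pac pae with ⟨e2, o2⟩ | ⟨e2, o2⟩ <;> rw [e2] at h2 <;>
  rcases min_cases pbc pbe with ⟨e3, o3⟩ | ⟨e3, o3⟩ <;> rw [e3] at h3 <;>
  rcases min_cases pae pbe with ⟨e4, o4⟩ | ⟨e4, o4⟩ <;> rw [e4] at h4 <;>
  rcases min_cases (pac + pbe) (pbc + pae) with ⟨e5, o5⟩ | ⟨e5, o5⟩ <;> rw [e5] <;> linarith

private lemma prodComm {V : Type*} (G : SimpleGraph V) (x₀ a b : V) :
    graphGromovProd G x₀ a b = graphGromovProd G x₀ b a := by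
  rw [gromovProd_eq, gromovProd_eq, ddist_comm G a b]
  ring

private lemma getVert_mem_support' {V : Type*} {G : SimpleGraph V} :
    ∀ {u v : V} (p : G.Walk u v) (i : ℕ), p.getVert i ∈ p.support := by
  intro u v p
  induction p with
  | nil => intro i; simp [SimpleGraph.Walk.getVert]
  | cons h q ih =>
    intro i
    cases i with
    | zero => simp [SimpleGraph.Walk.getVert]
    | succ n => simpa using Or.inr (ih n)

private lemma dist_getVert_le {V : Type*} {G : SimpleGraph V} (hconn : G.Connected) :
    ∀ {u v : V} (p : G.Walk u v) (i : ℕ), G.dist u (p.getVert i) ≤ i := by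
  intro u v p
  induction p with
  | nil =>
    intro i
    simp [SimpleGraph.Walk.getVert, SimpleGraph.dist_self]
  | @cons a b c h q ih =>
    intro i
    cases i with
    | zero => simp [SimpleGraph.Walk.getVert, SimpleGraph.dist_self]
    | succ n =>
      have h1 : G.dist a (q.getVert n) ≤ G.dist a b + G.dist b (q.getVert n) :=
        hconn.dist_triangle
      have h2 : G.dist a b ≤ 1 := by
        have := SimpleGraph.dist_le (SimpleGraph.Walk.cons h SimpleGraph.Walk.nil)
        simpa using this
      have h3 := ih n
      calc G.dist a ((SimpleGraph.Walk.cons h q).getVert (n + 1))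
          = G.dist a (q.getVert n) := rfl
        _ ≤ G.dist a b + G.dist b (q.getVert n) := h1
        _ ≤ 1 + n := by omega
        _ = n + 1 := by omega

/-- distance from `getVert i` to the end is at most `length - i`. -/
private lemma dist_getVert_end {V : Type*} {G : SimpleGraph V} :
    ∀ {u v : V} (p : G.Walk u v) (i : ℕ), i ≤ p.length →
      G.dist (p.getVert i) v + i ≤ p.length := by
  intro u v p
  induction p with
  | nil =>
    intro i hi
    simp at hi
    subst hi
    simp [SimpleGraph.Walk.getVert]
  | @cons a b c h q ih =>
    intro i hi
    cases i with
    | zero =>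
      have : G.dist a c ≤ (SimpleGraph.Walk.cons h q).length :=
        SimpleGraph.dist_le _
      simpa [SimpleGraph.Walk.getVert] using this
    | succ n =>
      have hn : n ≤ q.length := by simpa [SimpleGraph.Walk.length_cons] using hi
      have := ih n hn
      have hg : (SimpleGraph.Walk.cons h q).getVert (n + 1) = q.getVert n := rfl
      rw [hg]
      simp only [SimpleGraph.Walk.length_cons]
      omega

private lemma le_foldr_max : ∀ (l : List ℕ) (x : ℕ), x ∈ l → x ≤ l.foldr max 0 := by
  intro l
  induction l with
  | nil => intro x hx; simp at hx
  | cons a t ih =>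
    intro x hx
    rcases List.mem_cons.mp hx with h | h
    · subst h; exact le_max_left _ _
    · exact le_trans (ih x h) (le_max_right _ _)

/-- Let `Γ` be a connected Gromov hyperbolic graph of bounded degree, `ω ∈ ∂Γ` a
boundary point given by a Gromov sequence `w`, and `λ v = β_ω(v, x₀)` the Busemann
function (a partial limit of `d(v, w n) − d(x₀, w n)`).  For vertices `u, v` let
`ℓ(u,v)` be the minimal value of `λ` along a geodesic from `u` to `v`.  Then there
is a constant `c > 0`, independent of `u`, `v` and the chosen geodesics, with
`|ℓ(u,v) − ℓ_{ω,x₀}(u,v)| < c`, where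
`ℓ_{ω,x₀}(u,v) = ½(β_ω(u,x₀) + β_ω(v,x₀) − d(u,v))`. -/
theorem min_busemann_along_geodesic
    {V : Type*} (G : SimpleGraph V) (hconn : G.Connected)
    (D : ℕ) (hdeg : ∀ v : V, (G.neighborSet v).ncard ≤ D)
    (x₀ : V) (δ : ℝ) (hδ : 0 ≤ δ)
    (hhyp : ∀ x y z : V, graphGromovProd G x₀ x z ≥
      min (graphGromovProd G x₀ x y) (graphGromovProd G x₀ y z) - δ)
    (w : ℕ → V)
    (hw : ∀ C : ℝ, ∃ N : ℕ, ∀ m n : ℕ, N ≤ m → N ≤ n →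
      C ≤ graphGromovProd G x₀ (w m) (w n))
    (lam : V → ℝ)
    (hlam : ∀ v : V, MapClusterPt (lam v) atTop
      (fun n => (G.dist v (w n) : ℝ) - (G.dist x₀ (w n) : ℝ))) :
    ∃ c : ℝ, 0 < c ∧ ∀ (u v : V) (p : G.Walk u v), p.length = G.dist u v →
      ∀ m : ℝ, (∀ x ∈ p.support, m ≤ lam x) → (∃ x ∈ p.support, lam x = m) →
        |m - (lam u + lam v - (G.dist u v : ℝ)) / 2| < c := by
  classical
  -- Step 1: oscillation bound for the Busemann candidates
  have hosc : ∀ v : V, ∃ N : ℕ, ∀ n : ℕ, N ≤ n →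
      |lam v - (ddist G v (w n) - ddist G x₀ (w n))| ≤ 2*δ := by
    intro v
    obtain ⟨N, hN⟩ := hw (ddist G x₀ v)
    refine ⟨N, fun n hn => ?_⟩
    have key : ∀ k l : ℕ, N ≤ k → N ≤ l →
        graphGromovProd G x₀ v (w l) ≥ graphGromovProd G x₀ v (w k) - δ := by
      intro k l hk hl
      have h1 := hhyp v (w k) (w l)
      have h2 := hN k l hk hl
      have h3 : graphGromovProd G x₀ v (w k) ≤ ddist G x₀ v := by
        rw [gromovProd_eq]
        have := ddist_tri hconn x₀ v (w k)
        linarith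
      have h4 : min (graphGromovProd G x₀ v (w k)) (graphGromovProd G x₀ (w k) (w l))
          = graphGromovProd G x₀ v (w k) := min_eq_left (by linarith)
      rw [h4] at h1
      exact h1
    have osc : ∀ k l : ℕ, N ≤ k → N ≤ l →
        |(ddist G v (w k) - ddist G x₀ (w k)) - (ddist G v (w l) - ddist G x₀ (w l))| ≤ 2*δ := by
      intro k l hk hl
      have e1 : ddist G v (w k) - ddist G x₀ (w k)
          = ddist G x₀ v - 2 * graphGromovProd G x₀ v (w k) := by
        rw [gromovProd_eq]; ring
      have e2 : ddist G v (w l) - ddist G x₀ (w l)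
          = ddist G x₀ v - 2 * graphGromovProd G x₀ v (w l) := by
        rw [gromovProd_eq]; ring
      have k1 := key k l hk hl
      have k2 := key l k hl hk
      rw [e1, e2, abs_le]
      constructor <;> linarith
    by_contra hcon
    push_neg at hcon
    have hεpos : 0 < (|lam v - (ddist G v (w n) - ddist G x₀ (w n))| - 2*δ) / 2 := by linarith
    have hfreq := mapClusterPt_iff_frequently.mp (hlam v)
      (Metric.ball (lam v) ((|lam v - (ddist G v (w n) - ddist G x₀ (w n))| - 2*δ) / 2))
      (Metric.ball_mem_nhds _ hεpos)
    obtain ⟨k, hk, hkball⟩ := Filter.frequently_atTop.mp hfreq (max N n)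
    have hkN : N ≤ k := le_trans (le_max_left _ _) hk
    have hclose : |(ddist G v (w k) - ddist G x₀ (w k)) - lam v|
        < (|lam v - (ddist G v (w n) - ddist G x₀ (w n))| - 2*δ) / 2 := by
      have h := Metric.mem_ball.mp hkball
      rw [Real.dist_eq] at h
      exact h
    have hoscn := osc k n hkN hn
    have habs := abs_sub_abs_le_abs_sub (lam v - (ddist G v (w n) - ddist G x₀ (w n)))
      (lam v - (ddist G v (w k) - ddist G x₀ (w k)))
    have h5 : |lam v - (ddist G v (w k) - ddist G x₀ (w k))|
        < (|lam v - (ddist G v (w n) - ddist G x₀ (w n))| - 2*δ) / 2 := by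
      rw [abs_sub_comm]; exact hclose
    have h6 : |(lam v - (ddist G v (w n) - ddist G x₀ (w n)))
          - (lam v - (ddist G v (w k) - ddist G x₀ (w k)))|
        = |(ddist G v (w k) - ddist G x₀ (w k)) - (ddist G v (w n) - ddist G x₀ (w n))| := by
      congr 1; ring
    rw [h6] at habs
    linarith
  -- Step 2: four point condition for arbitrary quadruples
  have fp : ∀ a b c e : V, ddist G a b + ddist G c e ≤
      max (ddist G a c + ddist G b e) (ddist G b c + ddist G a e) + 4*δ := by
    intro a b c e
    have h1 := hhyp a c b
    have h2 := hhyp c a e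
    have h3 := hhyp c b e
    have h4 := hhyp a e b
    rw [prodComm G x₀ c b] at h1
    rw [prodComm G x₀ c a] at h2
    rw [prodComm G x₀ c b] at h3
    rw [prodComm G x₀ e b] at h4
    have main := gromov_four h1 h2 h3 h4
    rw [gromovProd_eq, gromovProd_eq, gromovProd_eq, gromovProd_eq, gromovProd_eq, gromovProd_eq] at main
    rcases min_cases
        ((ddist G x₀ a + ddist G x₀ c - ddist G a c)/2
          + (ddist G x₀ b + ddist G x₀ e - ddist G b e)/2)
        ((ddist G x₀ b + ddist G x₀ c - ddist G b c)/2
          + (ddist G x₀ a + ddist G x₀ e - ddist G a e)/2) with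
      ⟨e5, o5⟩ | ⟨e5, o5⟩ <;> rw [e5] at main <;>
    rcases max_cases (ddist G a c + ddist G b e) (ddist G b c + ddist G a e) with
      ⟨e6, o6⟩ | ⟨e6, o6⟩ <;> rw [e6] <;> linarith
  -- the constant
  refine ⟨8*δ + 2, by linarith, ?_⟩
  intro u v p hp m hmin hex
  obtain ⟨xm, hxm_mem, hxm_eq⟩ := hex
  have hsupp : ∀ x ∈ p.support, G.dist u x + G.dist x v = G.dist u v := by
    intro x hx
    obtain ⟨q, r, hqr⟩ := SimpleGraph.Walk.mem_support_iff_exists_append.mp hx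
    have hq : G.dist u x ≤ q.length := SimpleGraph.dist_le q
    have hr : G.dist x v ≤ r.length := SimpleGraph.dist_le r
    have hlen : q.length + r.length = p.length := by
      rw [hqr, SimpleGraph.Walk.length_append]
    have htri := hconn.dist_triangle (u := u) (v := x) (w := v)
    omega
  -- pick a common index N
  choose Nf hNf using hosc
  obtain ⟨N, hNall⟩ : ∃ N : ℕ, ∀ x ∈ p.support,
      |lam x - (ddist G x (w N) - ddist G x₀ (w N))| ≤ 2*δ := by
    refine ⟨(p.support.map Nf).foldr max 0, fun x hx => ?_⟩
    have hxN : Nf x ≤ (p.support.map Nf).foldr max 0 :=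
      le_foldr_max (p.support.map Nf) (Nf x) (List.mem_map.mpr ⟨x, hx, rfl⟩)
    exact hNf x _ hxN
  have hau := hNall u p.start_mem_support
  have hav := hNall v p.end_mem_support
  have haxm := hNall xm hxm_mem
  have hcast : (G.dist u v : ℝ) = ddist G u v := rfl
  rw [hcast]
  -- lower bound : m ≥ (lam u + lam v - d)/2 - 4δ
  have hlow : (lam u + lam v - ddist G u v) / 2 - m ≤ 4*δ := by
    have h1 : ddist G u (w N) ≤ ddist G u xm + ddist G xm (w N) := ddist_tri hconn u xm (w N)
    have h2 : ddist G v (w N) ≤ ddist G v xm + ddist G xm (w N) := ddist_tri hconn v xm (w N)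
    have h3 : ddist G u xm + ddist G xm v = ddist G u v := by
      have := hsupp xm hxm_mem
      unfold ddist
      exact_mod_cast this
    have h4 : ddist G v xm = ddist G xm v := ddist_comm G v xm
    have h5 := abs_le.mp hau
    have h6 := abs_le.mp hav
    have h7 := abs_le.mp haxm
    rw [← hxm_eq]
    linarith
  -- upper bound
  have hup : m - (lam u + lam v - ddist G u v) / 2 ≤ 8*δ + 1 := by
    have habd : |(ddist G u (w N) - ddist G x₀ (w N)) - (ddist G v (w N) - ddist G x₀ (w N))|
        ≤ ddist G u v := by
      have h1 : ddist G u (w N) ≤ ddist G u v + ddist G v (w N) := ddist_tri hconn u v (w N)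
      have h2 : ddist G v (w N) ≤ ddist G v u + ddist G u (w N) := ddist_tri hconn v u (w N)
      have h3 : ddist G v u = ddist G u v := ddist_comm G v u
      rw [abs_le]
      constructor <;> linarith
    obtain ⟨hr0, hrd⟩ : 0 ≤ ((ddist G u (w N) - ddist G x₀ (w N))
          - (ddist G v (w N) - ddist G x₀ (w N)) + ddist G u v) / 2 ∧
        ((ddist G u (w N) - ddist G x₀ (w N))
          - (ddist G v (w N) - ddist G x₀ (w N)) + ddist G u v) / 2 ≤ ddist G u v := by
      have h := abs_le.mp habd
      constructor <;> linarith [h.1, h.2]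
    set r : ℝ := ((ddist G u (w N) - ddist G x₀ (w N))
      - (ddist G v (w N) - ddist G x₀ (w N)) + ddist G u v) / 2 with hrdef
    have hir : (⌊r⌋₊ : ℝ) ≤ r := Nat.floor_le hr0
    have hir2 : r < (⌊r⌋₊ : ℝ) + 1 := Nat.lt_floor_add_one r
    have hiL : ⌊r⌋₊ ≤ G.dist u v := by
      have h := Nat.floor_le_floor hrd
      have h2 : ⌊ddist G u v⌋₊ = G.dist u v := by
        unfold ddist; exact Nat.floor_natCast _
      omega
    have hxsupp : p.getVert ⌊r⌋₊ ∈ p.support := getVert_mem_support' p ⌊r⌋₊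
    have hd1 : G.dist u (p.getVert ⌊r⌋₊) ≤ ⌊r⌋₊ := dist_getVert_le hconn p ⌊r⌋₊
    have hd2 : G.dist (p.getVert ⌊r⌋₊) v + ⌊r⌋₊ ≤ p.length :=
      dist_getVert_end p ⌊r⌋₊ (by omega)
    have hd3 : G.dist u (p.getVert ⌊r⌋₊) + G.dist (p.getVert ⌊r⌋₊) v = G.dist u v :=
      hsupp _ hxsupp
    have hddux : ddist G u (p.getVert ⌊r⌋₊) = (⌊r⌋₊ : ℝ) := by
      have : G.dist u (p.getVert ⌊r⌋₊) = ⌊r⌋₊ := by omega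
      unfold ddist; rw [this]
    have hddxv : ddist G (p.getVert ⌊r⌋₊) v = ddist G u v - (⌊r⌋₊ : ℝ) := by
      have h9 : G.dist (p.getVert ⌊r⌋₊) v = G.dist u v - ⌊r⌋₊ := by omega
      unfold ddist
      rw [h9]
      rw [Nat.cast_sub hiL]
    have hfp := fp u v (p.getVert ⌊r⌋₊) (w N)
    have hduv : ddist G u v = ddist G u (p.getVert ⌊r⌋₊) + ddist G (p.getVert ⌊r⌋₊) v := by
      unfold ddist
      exact_mod_cast hd3.symm
    have hvx : ddist G v (p.getVert ⌊r⌋₊) = ddist G (p.getVert ⌊r⌋₊) v :=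
      ddist_comm G v _
    have hax := hNall _ hxsupp
    have hmx : m ≤ lam (p.getVert ⌊r⌋₊) := hmin _ hxsupp
    have h5 := abs_le.mp hau
    have h6 := abs_le.mp hav
    have h7 := abs_le.mp hax
    rcases max_cases (ddist G u (p.getVert ⌊r⌋₊) + ddist G v (w N))
        (ddist G v (p.getVert ⌊r⌋₊) + ddist G u (w N)) with ⟨e6, o6⟩ | ⟨e6, o6⟩ <;>
      rw [e6] at hfp <;> rw [hrdef] at hir hir2 <;> linarith
  rw [abs_lt]
  constructor <;> linarith
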